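/- Let N > 0 and α ∈ ℂ, and define for n ∈ ℕ: p_N(n|α) := (1/(N+1))·(N/(N+1))^n·exp(−|α|²/(N+1))·L_n(−|α|²/(N·(N+1))), where L_n(x) := Σ_{j=0}^n binom(n,j)·(−x)^j/j! is the n-th Laguerre polynomial. Then p_N(n|α) ≥ 0 for every n ∈ ℕ and Σ_{n=0}^∞ p_N(n|α) = 1; that is, p_N(·|α) is a probability distribution on ℕ. -/

import Mathlib

/-- The `n`-th Laguerre polynomial `L_n(x) = Σ_{j=0}^n binom(n,j)·(−x)^j/j!`. -/
noncomputable def laguerre (n : ℕ) (x : ℝ) : ℝ :=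
  ∑ j ∈ Finset.range (n + 1), (n.choose j : ℝ) * (-x) ^ j / (Nat.factorial j : ℝ)

/-- Photon-number distribution of a displaced thermal state with mean thermal photon
number `N` and displacement `α`. -/
noncomputable def pdisp (N : ℝ) (α : ℂ) (n : ℕ) : ℝ :=
  (1 / (N + 1)) * (N / (N + 1)) ^ n * Real.exp (-(‖α‖) ^ 2 / (N + 1)) *
    laguerre n (-(‖α‖) ^ 2 / (N * (N + 1)))

/-- `p_N(·|α)` is a probability distribution on `ℕ`: it is nonnegative, summable,
and sums to `1`. -/
theorem displaced_thermal_is_prob (N : ℝ) (hN : 0 < N) (α : ℂ) :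
    (∀ n : ℕ, 0 ≤ pdisp N α n) ∧
    Summable (fun n : ℕ => pdisp N α n) ∧
    ∑' n : ℕ, pdisp N α n = 1 := by
  have hN1 : (0:ℝ) < N + 1 := by linarith
  set c : ℝ := (‖α‖) ^ 2 with hc_def
  have hc : 0 ≤ c := sq_nonneg _
  set q : ℝ := N / (N + 1) with hq_def
  set y : ℝ := c / (N * (N + 1)) with hy_def
  set A : ℝ := 1 / (N + 1) with hA_def
  set E : ℝ := Real.exp (-c / (N + 1)) with hE_def
  have hy : 0 ≤ y := div_nonneg hc (by positivity)
  have hq0 : 0 < q := div_pos hN hN1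
  have hq1 : q < 1 := by
    rw [hq_def, div_lt_one hN1]; linarith
  have hA : 0 < A := by positivity
  have hE : 0 < E := Real.exp_pos _
  -- the summand
  set g : ℕ → ℕ → ℝ := fun n j => A * E * q ^ n * ((n.choose j : ℝ) * y ^ j / (j.factorial : ℝ))
    with hg_def
  have hg_nonneg : ∀ n j, 0 ≤ g n j := by
    intro n j
    have : (0:ℝ) ≤ (n.choose j : ℝ) * y ^ j / (j.factorial : ℝ) := by positivity
    positivity
  have hpd : ∀ n, pdisp N α n = ∑ j ∈ Finset.range (n + 1), g n j := by
    intro n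
    rw [pdisp, laguerre]
    rw [Finset.mul_sum]
    apply Finset.sum_congr rfl
    intro j _
    have : -(-c / (N * (N + 1))) = y := by rw [hy_def]; ring
    rw [this, hg_def]
    ring
  have hnn : ∀ n, 0 ≤ pdisp N α n := by
    intro n
    rw [hpd n]
    exact Finset.sum_nonneg fun j _ => hg_nonneg n j
  refine ⟨hnn, ?_⟩
  -- work in ℝ≥0∞
  set H : ℕ → ℕ → ENNReal := fun n j => if j ≤ n then ENNReal.ofReal (g n j) else 0 with hH_def
  have hpdH : ∀ n, ENNReal.ofReal (pdisp N α n) = ∑' j, H n j := by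
    intro n
    rw [hpd n, ENNReal.ofReal_sum_of_nonneg (fun j _ => hg_nonneg n j)]
    rw [tsum_eq_sum (s := Finset.range (n + 1)) (by
      intro j hj
      simp only [Finset.mem_range, not_lt] at hj
      simp [hH_def, Nat.lt_of_succ_le hj, Nat.not_le.mpr (Nat.lt_of_succ_le hj)])]
    apply Finset.sum_congr rfl
    intro j hj
    simp only [Finset.mem_range] at hj
    simp [hH_def, Nat.lt_succ_iff.mp hj]
  -- geometric-choose sum
  have hgeo : ∀ j : ℕ, HasSum (fun m : ℕ => ((m + j).choose j : ℝ) * q ^ m)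
      (1 / (1 - q) ^ (j + 1)) := fun j =>
    hasSum_choose_mul_geometric_of_norm_lt_one j (by
      rw [Real.norm_eq_abs, abs_of_pos hq0]; exact hq1)
  have h1q : 1 - q = 1 / (N + 1) := by
    rw [hq_def]; field_simp; ring
  -- inner sum over n for fixed j
  have hinner : ∀ j : ℕ, (∑' n, H n j) = ENNReal.ofReal (E * (c / (N + 1)) ^ j / j.factorial) := by
    intro j
    have hshift : (∑' m : ℕ, H (m + j) j) = ∑' n, H n j := by
      refine Function.Injective.tsum_eq (g := fun m => m + j) (f := fun n => H n j)
        (add_left_injective j) ?_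
      intro n hn
      simp only [Function.mem_support, hH_def] at hn
      have hjn : j ≤ n := by
        by_contra h
        exact hn (by simp [Nat.not_le.mp h, Nat.not_le.mpr (Nat.not_le.mp h)])
      exact ⟨n - j, by simpa using Nat.sub_add_cancel hjn⟩
    rw [← hshift]
    have hHval : ∀ m : ℕ, H (m + j) j =
        ENNReal.ofReal (A * E * q ^ j * y ^ j / j.factorial) *
          ENNReal.ofReal (((m + j).choose j : ℝ) * q ^ m) := by
      intro m
      rw [hH_def]
      simp only [Nat.le_add_left, if_pos]
      rw [← ENNReal.ofReal_mul (by positivity)]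
      congr 1
      simp only [hg_def]
      rw [pow_add]
      ring
    calc (∑' m : ℕ, H (m + j) j)
        = ENNReal.ofReal (A * E * q ^ j * y ^ j / j.factorial) *
            ∑' m, ENNReal.ofReal (((m + j).choose j : ℝ) * q ^ m) := by
          rw [← ENNReal.tsum_mul_left]; exact tsum_congr hHval
      _ = ENNReal.ofReal (A * E * q ^ j * y ^ j / j.factorial) *
            ENNReal.ofReal (1 / (1 - q) ^ (j + 1)) := by
          congr 1
          rw [← ENNReal.ofReal_tsum_of_nonneg (fun m => by positivity) (hgeo j).summable,
            (hgeo j).tsum_eq]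
      _ = ENNReal.ofReal (E * (c / (N + 1)) ^ j / j.factorial) := by
          rw [← ENNReal.ofReal_mul (by positivity)]
          congr 1
          rw [h1q]
          have hpow : (1:ℝ) / (1 / (N + 1)) ^ (j + 1) = (N + 1) ^ (j + 1) := by
            rw [div_pow, one_pow, one_div, one_div, inv_inv]
          rw [hpow]
          have hyq : q * y * (N + 1) = c / (N + 1) := by
            rw [hy_def, hq_def]
            field_simp
          have hexpand : (q * y * (N + 1)) ^ j = q ^ j * y ^ j * (N + 1) ^ j := by
            rw [mul_pow, mul_pow]
          rw [← hyq, hexpand, pow_succ]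
          have hA1 : A * (N + 1) = 1 := by rw [hA_def]; field_simp
          calc A * E * q ^ j * y ^ j / j.factorial * ((N + 1) ^ j * (N + 1))
              = (A * (N + 1)) * (E * (q ^ j * y ^ j * (N + 1) ^ j) / j.factorial) := by ring
            _ = E * (q ^ j * y ^ j * (N + 1) ^ j) / j.factorial := by rw [hA1, one_mul]
  -- exp sum
  have hexp : HasSum (fun j : ℕ => E * ((c / (N + 1)) ^ j / j.factorial))
      (E * Real.exp (c / (N + 1))) := by
    apply HasSum.mul_left
    rw [Real.exp_eq_exp_ℝ]
    exact NormedSpace.expSeries_div_hasSum_exp _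
  have hEexp : E * Real.exp (c / (N + 1)) = 1 := by
    have h0 : -c / (N + 1) + c / (N + 1) = 0 := by ring
    rw [hE_def, ← Real.exp_add, h0, Real.exp_zero]
  have hS : (∑' n, ENNReal.ofReal (pdisp N α n)) = 1 := by
    calc (∑' n, ENNReal.ofReal (pdisp N α n))
        = ∑' n, ∑' j, H n j := tsum_congr hpdH
      _ = ∑' j, ∑' n, H n j := ENNReal.tsum_comm
      _ = ∑' j, ENNReal.ofReal (E * (c / (N + 1)) ^ j / j.factorial) := tsum_congr hinner
      _ = ENNReal.ofReal (E * Real.exp (c / (N + 1))) := by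
          rw [← ENNReal.ofReal_tsum_of_nonneg (fun j => by positivity)
            (by exact hexp.summable.congr (fun j => by ring))]
          congr 1
          rw [← hexp.tsum_eq]
          exact tsum_congr (fun j => by ring)
      _ = 1 := by rw [hEexp, ENNReal.ofReal_one]
  have hsummable : Summable (fun n : ℕ => pdisp N α n) := by
    have := ENNReal.summable_toReal (f := fun n => ENNReal.ofReal (pdisp N α n))
      (by rw [hS]; exact ENNReal.one_ne_top)
    exact this.congr fun n => ENNReal.toReal_ofReal (hnn n)
  refine ⟨hsummable, ?_⟩
  have : (∑' n, ENNReal.ofReal (pdisp N α n)).toReal = ∑' n, pdisp N α n := by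
    rw [ENNReal.tsum_toReal_eq (fun n => ENNReal.ofReal_ne_top)]
    exact tsum_congr fun n => ENNReal.toReal_ofReal (hnn n)
  rw [← this, hS, ENNReal.toReal_one]
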